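/- Let B ∈ ℝ^{n×n} be symmetric with λ_max(B) > 0, let ρ(B) be its spectral radius, and let B̂ be its strictly block upper triangular part. Let β ∈ (0, 1/ρ(B)) and suppose that the matrix I_n − β(I_n + β B̂)^{-1}B is invertible. Then the matrix (I_n − β(I_n + β B̂)^{-1}B)^{-1} has at least one (complex) eigenvalue whose magnitude is strictly greater than one. -/

import Mathlib

open Matrix MeasureTheory Filter Topology

noncomputable section

/-- A map is a (C¹) diffeomorphism if it is continuously differentiable, bijective,
and its inverse is continuously differentiable. -/
def IsDiffeomorphism {E : Type*} [NormedAddCommGroup E] [NormedSpace ℝ E] (g : E → E) : Prop :=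
  ContDiff ℝ 1 g ∧ Function.Bijective g ∧ ContDiff ℝ 1 (Function.invFun g)

/-- Jacobian matrix of a self-map of a Euclidean space. -/
def jacobianMatrix {ι : Type*} [Fintype ι] [DecidableEq ι]
    (g : EuclideanSpace ℝ ι → EuclideanSpace ℝ ι) (x : EuclideanSpace ℝ ι) :
    Matrix ι ι ℝ :=
  Matrix.of fun i j => fderiv ℝ g x (EuclideanSpace.single j 1) i

/-- The Hessian matrix of `f` at `x` (Jacobian of the gradient). -/
def hessianMatrix {ι : Type*} [Fintype ι] [DecidableEq ι]
    (f : EuclideanSpace ℝ ι → ℝ) (x : EuclideanSpace ℝ ι) : Matrix ι ι ℝ :=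
  jacobianMatrix (gradient f) x

/-- `z` is an eigenvalue (over `ℂ`) of the real matrix `M`. -/
def IsEigenvalue {ι : Type*} [Fintype ι] (M : Matrix ι ι ℝ) (z : ℂ) : Prop :=
  ∃ v : ι → ℂ, v ≠ 0 ∧ (M.map Complex.ofReal).mulVec v = z • v

/-- A real matrix has a negative (real) eigenvalue. -/
def HasNegEigenvalue {ι : Type*} [Fintype ι] (M : Matrix ι ι ℝ) : Prop :=
  ∃ (c : ℝ) (v : ι → ℝ), c < 0 ∧ v ≠ 0 ∧ M.mulVec v = c • v

/-- Strict saddle point: critical point whose Hessian has a negative eigenvalue. -/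
def IsStrictSaddle {ι : Type*} [Fintype ι] [DecidableEq ι]
    (f : EuclideanSpace ℝ ι → ℝ) (x : EuclideanSpace ℝ ι) : Prop :=
  gradient f x = 0 ∧ HasNegEigenvalue (hessianMatrix f x)

/-- The block-gradient-descent step `g^s_{αf}(x) = x - α U_s ∇_s f(x)`. -/
def blockGradStep {n p : ℕ} (f : EuclideanSpace ℝ (Fin n) → ℝ) (α : ℝ)
    (blk : Fin n → Fin p) (s : Fin p) (x : EuclideanSpace ℝ (Fin n)) :
    EuclideanSpace ℝ (Fin n) :=
  (WithLp.equiv 2 (Fin n → ℝ)).symm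
    fun i => x i - if blk i = s then α * gradient f x i else 0

/-- The BCGD map `g_{αf} = g^p ∘ ⋯ ∘ g^1` (block 1 is applied first). -/
def bcgdMap {n p : ℕ} (f : EuclideanSpace ℝ (Fin n) → ℝ) (α : ℝ)
    (blk : Fin n → Fin p) (x : EuclideanSpace ℝ (Fin n)) : EuclideanSpace ℝ (Fin n) :=
  (List.finRange p).foldl (fun y s => blockGradStep f α blk s y) x

/-- The projection matrix `U_s U_sᵀ` onto the coordinates of block `s`. -/
def blockProj {n p : ℕ} (blk : Fin n → Fin p) (s : Fin p) : Matrix (Fin n) (Fin n) ℝ :=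
  Matrix.diagonal fun i => if blk i = s then 1 else 0

/-- Strictly block lower triangular part of a matrix. -/
def lowerBlockPart {n p : ℕ} (blk : Fin n → Fin p) (A : Matrix (Fin n) (Fin n) ℝ) :
    Matrix (Fin n) (Fin n) ℝ :=
  Matrix.of fun i j => if blk j < blk i then A i j else 0

/-- Strictly block upper triangular part of a matrix. -/
def upperBlockPart {n p : ℕ} (blk : Fin n → Fin p) (A : Matrix (Fin n) (Fin n) ℝ) :
    Matrix (Fin n) (Fin n) ℝ :=
  Matrix.of fun i j => if blk i < blk j then A i j else 0

/-- Spectral radius of a real matrix: the largest modulus of its complex eigenvalues. -/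
def specRad {ι : Type*} [Fintype ι] (M : Matrix ι ι ℝ) : ℝ :=
  sSup {r : ℝ | ∃ z : ℂ, IsEigenvalue M z ∧ r = ‖z‖}


/-- A real matrix has a positive (real) eigenvalue. -/
def HasPosEigenvalue {ι : Type*} [Fintype ι] (M : Matrix ι ι ℝ) : Prop :=
  ∃ (c : ℝ) (v : ι → ℝ), 0 < c ∧ v ≠ 0 ∧ M.mulVec v = c • v

namespace BCGDAux
open Complex Filter

variable {ι : Type*} [Fintype ι]

lemma re_star_dot_self (x : ι → ℂ) : (star x ⬝ᵥ x).re = ∑ i, normSq (x i) := by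
  rw [dotProduct, Complex.re_sum]
  refine Finset.sum_congr rfl fun i _ => ?_
  simp [mul_comm, Complex.mul_conj]

lemma re_star_dot_self_nonneg (x : ι → ℂ) : 0 ≤ (star x ⬝ᵥ x).re := by
  rw [re_star_dot_self]
  exact Finset.sum_nonneg fun i _ => normSq_nonneg _

lemma eq_zero_of_re_star_dot_self (x : ι → ℂ) (h : (star x ⬝ᵥ x).re ≤ 0) : x = 0 := by
  rw [re_star_dot_self] at h
  funext i
  have h1 : ∀ j ∈ Finset.univ, (0:ℝ) ≤ normSq (x j) := fun j _ => normSq_nonneg _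
  have := (Finset.sum_eq_zero_iff_of_nonneg h1).mp
    (le_antisymm h (Finset.sum_nonneg h1)) i (Finset.mem_univ i)
  simpa [Complex.normSq_eq_zero] using this

lemma star_dot_mulVec (M : Matrix ι ι ℂ) (a b : ι → ℂ) :
    star (star a ⬝ᵥ M *ᵥ b) = star b ⬝ᵥ Mᴴ *ᵥ a := by
  rw [star_dotProduct, star_star, Matrix.star_mulVec, Matrix.dotProduct_mulVec]

lemma isEigenvalue_abs_le (M : Matrix ι ι ℝ) {z : ℂ} (h : IsEigenvalue M z) :
    ‖z‖ ≤ ∑ i, ∑ j, |M i j| := by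
  obtain ⟨v, hv, hMv⟩ := h
  obtain ⟨i0, hi0⟩ := Function.ne_iff.mp hv
  obtain ⟨i, -, hmax⟩ := Finset.exists_max_image Finset.univ
    (fun i => ‖v i‖) ⟨i0, Finset.mem_univ _⟩
  have hvi : 0 < ‖v i‖ :=
    lt_of_lt_of_le (by simpa using hi0) (hmax i0 (Finset.mem_univ _))
  have key : ‖z‖ * ‖v i‖ ≤ (∑ i, ∑ j, |M i j|) * ‖v i‖ := by
    have h1 : (M.map Complex.ofReal *ᵥ v) i = z * v i := by
      rw [hMv]; simp
    calc ‖z‖ * ‖v i‖ = ‖(M.map Complex.ofReal *ᵥ v) i‖ := by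
          rw [h1, norm_mul]
      _ ≤ ∑ j, |M i j| * ‖v i‖ := by
          show ‖∑ j, (M.map Complex.ofReal) i j * v j‖ ≤ _
          refine le_trans (norm_sum_le _ _) (Finset.sum_le_sum fun j _ => ?_)
          rw [norm_mul]
          simp only [Matrix.map_apply, Complex.norm_real, Real.norm_eq_abs]
          exact mul_le_mul_of_nonneg_left (hmax j (Finset.mem_univ _)) (abs_nonneg _)
      _ = (∑ j, |M i j|) * ‖v i‖ := by rw [Finset.sum_mul]
      _ ≤ (∑ i, ∑ j, |M i j|) * ‖v i‖ := by
          refine mul_le_mul_of_nonneg_right ?_ (norm_nonneg _)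
          exact Finset.single_le_sum (f := fun i => ∑ j, |M i j|)
            (fun k _ => Finset.sum_nonneg fun j _ => abs_nonneg _) (Finset.mem_univ i)
  exact le_of_mul_le_mul_right key hvi

lemma abs_le_specRad (M : Matrix ι ι ℝ) {z : ℂ} (h : IsEigenvalue M z) :
    ‖z‖ ≤ specRad M := by
  refine le_csSup ⟨∑ i, ∑ j, |M i j|, ?_⟩ ⟨z, h, rfl⟩
  rintro r ⟨w, hw, rfl⟩
  exact isEigenvalue_abs_le M hw

end BCGDAux
namespace BCGDAux
open Complex Filter

variable {ι : Type*} [Fintype ι] [DecidableEq ι]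

lemma rayleigh_le (B : Matrix ι ι ℝ) (hB : B.IsSymm) (u : ι → ℂ) :
    (star u ⬝ᵥ (B.map Complex.ofReal) *ᵥ u).re ≤ specRad B * (star u ⬝ᵥ u).re := by
  set Bc := B.map Complex.ofReal with hBcdef
  have hBc : Bc.IsHermitian := by
    ext i j
    simp only [Matrix.conjTranspose_apply, Matrix.map_apply, Bc, star_def, conj_ofReal]
    rw [hB.apply]
  set V : Matrix ι ι ℂ := (hBc.eigenvectorUnitary : Matrix ι ι ℂ) with hVdef
  have hV2 : V * star V = 1 := Unitary.mul_star_self_of_mem hBc.eigenvectorUnitary.2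
  set w : ι → ℂ := star V *ᵥ u with hwdef
  have hsw : star w = star u ᵥ* V := by
    rw [hwdef, Matrix.star_mulVec, Matrix.star_eq_conjTranspose, Matrix.conjTranspose_conjTranspose]
  have hdot : ∀ y : ι → ℂ, star w ⬝ᵥ y = star u ⬝ᵥ V *ᵥ y := by
    intro y
    rw [hsw, ← Matrix.dotProduct_mulVec]
  have key1 : star u ⬝ᵥ Bc *ᵥ u
      = star w ⬝ᵥ (Matrix.diagonal (Complex.ofReal ∘ hBc.eigenvalues)) *ᵥ w := by
    conv_lhs => rw [hBc.spectral_theorem, Unitary.conjStarAlgAut_apply]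
    rw [← Matrix.mulVec_mulVec, ← Matrix.mulVec_mulVec, hdot]
    rfl
  have key2 : star u ⬝ᵥ u = star w ⬝ᵥ w := by
    rw [hdot, Matrix.mulVec_mulVec, hV2, Matrix.one_mulVec]
  have heig : ∀ i, IsEigenvalue B ((hBc.eigenvalues i : ℝ) : ℂ) := by
    intro i
    refine ⟨⇑(hBc.eigenvectorBasis i), ?_, ?_⟩
    · intro h
      exact hBc.eigenvectorBasis.orthonormal.ne_zero i (by ext j; exact congrFun h j)
    · rw [← hBcdef, hBc.mulVec_eigenvectorBasis]
      funext j
      simp [Complex.real_smul]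
  have hle : ∀ i, hBc.eigenvalues i ≤ specRad B := by
    intro i
    refine le_trans (le_abs_self _) ?_
    simpa using abs_le_specRad B (heig i)
  have expand : (star w ⬝ᵥ (Matrix.diagonal (Complex.ofReal ∘ hBc.eigenvalues)) *ᵥ w).re
      = ∑ i, hBc.eigenvalues i * normSq (w i) := by
    rw [dotProduct, Complex.re_sum]
    refine Finset.sum_congr rfl fun i _ => ?_
    rw [Matrix.mulVec_diagonal]
    simp only [Function.comp_apply]
    have : star w i * (Complex.ofReal (hBc.eigenvalues i) * w i)
        = (hBc.eigenvalues i : ℂ) * ((w i) * (starRingEnd ℂ) (w i)) := by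
      simp only [Pi.star_apply, star_def]; ring
    rw [this, Complex.mul_conj, ← Complex.ofReal_mul, Complex.ofReal_re]
  rw [key1, key2, expand, re_star_dot_self]
  rw [Finset.mul_sum]
  exact Finset.sum_le_sum fun i _ =>
    mul_le_mul_of_nonneg_right (hle i) (normSq_nonneg _)

end BCGDAux
namespace BCGDAux
open Complex Filter

section Blocks
variable {n p : ℕ} (blk : Fin n → Fin p) (B : Matrix (Fin n) (Fin n) ℝ) (β : ℝ)

/-- complexified block diagonal part -/
def Dc : Matrix (Fin n) (Fin n) ℂ :=
  Matrix.of fun i j => if blk i = blk j then (B i j : ℂ) else 0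

lemma dD_le (hB : B.IsSymm) (e : Fin n → ℂ) :
    (star e ⬝ᵥ (Dc blk B) *ᵥ e).re ≤ specRad B * (star e ⬝ᵥ e).re := by
  classical
  set mask : Fin p → (Fin n → ℂ) := fun s i => if blk i = s then e i else 0 with hmask
  have id1 : star e ⬝ᵥ (Dc blk B) *ᵥ e
      = ∑ s, star (mask s) ⬝ᵥ (B.map Complex.ofReal) *ᵥ (mask s) := by
    have lhs : star e ⬝ᵥ (Dc blk B) *ᵥ e
        = ∑ i, ∑ j, (if blk i = blk j then star (e i) * (B i j : ℂ) * e j else 0) := by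
      rw [dotProduct]
      refine Finset.sum_congr rfl fun i _ => ?_
      rw [Matrix.mulVec, dotProduct, Finset.mul_sum]
      refine Finset.sum_congr rfl fun j _ => ?_
      by_cases h : blk i = blk j <;> simp [Dc, h, mul_assoc, mul_comm, mul_left_comm]
    have rhs : ∀ s, star (mask s) ⬝ᵥ (B.map Complex.ofReal) *ᵥ (mask s)
        = ∑ i, ∑ j, (if blk i = s ∧ blk j = s then star (e i) * (B i j : ℂ) * e j else 0) := by
      intro s
      rw [dotProduct]
      refine Finset.sum_congr rfl fun i _ => ?_
      rw [Matrix.mulVec, dotProduct, Finset.mul_sum]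
      refine Finset.sum_congr rfl fun j _ => ?_
      by_cases hi : blk i = s <;> by_cases hj : blk j = s <;>
        simp [hmask, hi, hj, mul_assoc, mul_comm, mul_left_comm]
    rw [lhs, Finset.sum_congr rfl (fun s _ => rhs s)]
    conv_rhs => rw [Finset.sum_comm]
    refine Finset.sum_congr rfl fun i _ => ?_
    conv_rhs => rw [Finset.sum_comm]
    refine Finset.sum_congr rfl fun j _ => ?_
    by_cases h : blk i = blk j
    · rw [if_pos h, ← h]
      rw [Finset.sum_eq_single (blk i)]
      · simp [h]
      · intro s _ hs
        rw [if_neg]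
        rintro ⟨h1, -⟩
        exact hs h1.symm
      · intro habs
        exact absurd (Finset.mem_univ _) habs
    · rw [if_neg h, Finset.sum_eq_zero]
      intro s _
      rw [if_neg]
      rintro ⟨h1, h2⟩
      exact h (h1.trans h2.symm)
  have id2 : (star e ⬝ᵥ e).re = ∑ s, (star (mask s) ⬝ᵥ (mask s)).re := by
    rw [re_star_dot_self, Finset.sum_congr rfl (fun s (_ : s ∈ Finset.univ) => re_star_dot_self (mask s))]
    conv_rhs => rw [Finset.sum_comm]
    refine Finset.sum_congr rfl fun i _ => ?_
    rw [Finset.sum_eq_single (blk i)]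
    · simp [hmask]
    · intro s _ hs
      simp only [hmask]
      rw [if_neg (fun h => hs h.symm), map_zero]
    · intro habs
      exact absurd (Finset.mem_univ _) habs
  calc (star e ⬝ᵥ (Dc blk B) *ᵥ e).re
      = ∑ s, (star (mask s) ⬝ᵥ (B.map Complex.ofReal) *ᵥ (mask s)).re := by
        rw [id1, Complex.re_sum]
    _ ≤ ∑ s, specRad B * (star (mask s) ⬝ᵥ (mask s)).re :=
        Finset.sum_le_sum fun s _ => rayleigh_le B hB (mask s)
    _ = specRad B * (star e ⬝ᵥ e).re := by rw [← Finset.mul_sum, id2]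

lemma upper_add_conj (hB : B.IsSymm) :
    ((upperBlockPart blk B).map Complex.ofReal)
      + ((upperBlockPart blk B).map Complex.ofReal)ᴴ
      = B.map Complex.ofReal - Dc blk B := by
  ext i j
  simp only [Matrix.add_apply, Matrix.sub_apply, Matrix.conjTranspose_apply, Matrix.map_apply,
    upperBlockPart, Dc, Matrix.of_apply]
  rcases lt_trichotomy (blk i) (blk j) with h | h | h
  · rw [if_pos h, if_neg (not_lt_of_gt h), if_neg (ne_of_lt h)]
    simp
  · rw [if_neg (by simp [h] : ¬ blk i < blk j), if_neg (by simp [h] : ¬ blk j < blk i), if_pos h]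
    simp
  · rw [if_neg (not_lt_of_gt h), if_pos h, if_neg (ne_of_gt h), hB.apply]
    simp [Complex.star_def, Complex.conj_ofReal]

lemma det_one_add_upper : ((1 : Matrix (Fin n) (Fin n) ℝ) + β • upperBlockPart blk B).det = 1 := by
  classical
  have hbt : ((1 : Matrix (Fin n) (Fin n) ℝ) + β • upperBlockPart blk B).BlockTriangular blk := by
    intro i j hij
    have hne : i ≠ j := fun h => absurd (h ▸ hij) (lt_irrefl _)
    simp [Matrix.one_apply_ne hne, upperBlockPart, not_lt_of_gt hij, asymm hij]
  rw [hbt.det]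
  refine Finset.prod_eq_one fun s _ => ?_
  have : ((1 : Matrix (Fin n) (Fin n) ℝ) + β • upperBlockPart blk B).toSquareBlock blk s
      = 1 := by
    ext ⟨i, hi⟩ ⟨j, hj⟩
    simp only [Matrix.toSquareBlock_def, Matrix.add_apply, Matrix.smul_apply, upperBlockPart,
      Matrix.of_apply]
    rw [if_neg (by rw [hi, hj]; exact lt_irrefl _), smul_zero, add_zero]
    by_cases h : i = j
    · subst h; simp
    · rw [Matrix.one_apply_ne h, Matrix.one_apply_ne (fun hc => h (Subtype.mk_eq_mk.mp hc))]
  rw [this, Matrix.det_one]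
end Blocks
end BCGDAux
namespace BCGDAux
open Complex Filter

section Energy
variable {n p : ℕ} (blk : Fin n → Fin p) (B : Matrix (Fin n) (Fin n) ℝ) (β : ℝ)

def Amat : Matrix (Fin n) (Fin n) ℝ :=
  1 - β • (((1 : Matrix (Fin n) (Fin n) ℝ) + β • upperBlockPart blk B)⁻¹ * B)

def Mc : Matrix (Fin n) (Fin n) ℂ :=
  1 + (β : ℂ) • (upperBlockPart blk B).map Complex.ofReal

def Ncmat : Matrix (Fin n) (Fin n) ℂ :=
  (((1 : Matrix (Fin n) (Fin n) ℝ) + β • upperBlockPart blk B)⁻¹).map Complex.ofReal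

lemma map_one_add_upper :
    (((1 : Matrix (Fin n) (Fin n) ℝ) + β • upperBlockPart blk B)).map Complex.ofReal
      = Mc blk B β := by
  ext i j
  simp [Mc, Matrix.map_apply, Matrix.add_apply, Matrix.smul_apply, Matrix.one_apply,
    apply_ite Complex.ofReal]

lemma isUnit_det_one_add_upper :
    IsUnit ((1 : Matrix (Fin n) (Fin n) ℝ) + β • upperBlockPart blk B).det := by
  rw [det_one_add_upper]; exact isUnit_one

lemma Mc_mul_Nc : Mc blk B β * Ncmat blk B β = 1 := by
  rw [← map_one_add_upper, Ncmat,
    show Complex.ofReal = ⇑Complex.ofRealHom from rfl, ← Matrix.map_mul,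
    Matrix.mul_nonsing_inv _ (isUnit_det_one_add_upper blk B β)]
  exact Matrix.map_one _ (map_zero _) (map_one _)

lemma Nc_mul_Mc : Ncmat blk B β * Mc blk B β = 1 := by
  rw [← map_one_add_upper, Ncmat,
    show Complex.ofReal = ⇑Complex.ofRealHom from rfl, ← Matrix.map_mul,
    Matrix.nonsing_inv_mul _ (isUnit_det_one_add_upper blk B β)]
  exact Matrix.map_one _ (map_zero _) (map_one _)

lemma Amat_map : (Amat blk B β).map Complex.ofReal
    = 1 - (β:ℂ) • (Ncmat blk B β * B.map Complex.ofReal) := by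
  ext i j
  by_cases h : i = j <;>
    simp only [Amat, Ncmat, Matrix.map_apply, Matrix.sub_apply, Matrix.smul_apply,
      Matrix.one_apply, Matrix.mul_apply, h, if_true, if_false, smul_eq_mul] <;>
    push_cast [if_true] <;>
    simp [h] <;> push_cast <;> ring

lemma e_eq (x : Fin n → ℂ) :
    x - (Amat blk B β).map Complex.ofReal *ᵥ x
      = (β:ℂ) • ((Ncmat blk B β * B.map Complex.ofReal) *ᵥ x) := by
  rw [Amat_map, Matrix.sub_mulVec, Matrix.one_mulVec, Matrix.smul_mulVec, sub_sub_cancel]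

lemma Mc_e (x : Fin n → ℂ) :
    Mc blk B β *ᵥ (x - (Amat blk B β).map Complex.ofReal *ᵥ x)
      = (β:ℂ) • ((B.map Complex.ofReal) *ᵥ x) := by
  rw [e_eq, Matrix.mulVec_smul, Matrix.mulVec_mulVec, ← Matrix.mul_assoc, Mc_mul_Nc,
    Matrix.one_mul]

lemma hermitian_map (hB : B.IsSymm) : (B.map Complex.ofReal)ᴴ = B.map Complex.ofReal := by
  ext i j
  simp only [Matrix.conjTranspose_apply, Matrix.map_apply, Complex.star_def, conj_ofReal]
  rw [hB.apply]

lemma energy (hB : B.IsSymm) (hβ0 : 0 < β) (hρβ : β * specRad B < 1) (x : Fin n → ℂ) :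
    (star (x - (Amat blk B β).map Complex.ofReal *ᵥ x)
        ⬝ᵥ (x - (Amat blk B β).map Complex.ofReal *ᵥ x)).re
      ≤ β * ((star x ⬝ᵥ (B.map Complex.ofReal) *ᵥ x).re
          - (star ((Amat blk B β).map Complex.ofReal *ᵥ x)
              ⬝ᵥ (B.map Complex.ofReal) *ᵥ ((Amat blk B β).map Complex.ofReal *ᵥ x)).re) := by
  set Bc := B.map Complex.ofReal with hBcdef
  have hBcH : Bcᴴ = Bc := hermitian_map B hB
  set Ax := (Amat blk B β).map Complex.ofReal *ᵥ x with hAxdef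
  set e := x - Ax with hedef
  have hAxe : Ax = x - e := by rw [hedef, sub_sub_cancel]
  have hMce : Mc blk B β *ᵥ e = (β:ℂ) • (Bc *ᵥ x) := Mc_e blk B β x
  set d : (Fin n → ℂ) → (Fin n → ℂ) → ℂ := fun a b => star a ⬝ᵥ Bc *ᵥ b with hd
  have hconj : ∀ a b, (d b a).re = (d a b).re := by
    intro a b
    have h1 := star_dot_mulVec Bc a b
    rw [hBcH] at h1
    rw [hd]
    simp only []
    rw [← h1, Complex.star_def, Complex.conj_re]
  have E1 : (star Ax ⬝ᵥ Bc *ᵥ Ax) = d x x - d x e - d e x + d e e := by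
    rw [hAxe, star_sub, sub_dotProduct, Matrix.mulVec_sub, dotProduct_sub, dotProduct_sub]
    simp only [hd]
    ring
  have E2 : β * (d e x).re = (star e ⬝ᵥ (Mc blk B β) *ᵥ e).re := by
    rw [hMce, dotProduct_smul]
    simp only [hd, smul_eq_mul, Complex.re_ofReal_mul]
  have E3 : 2 * (star e ⬝ᵥ (Mc blk B β) *ᵥ e).re
      = (star e ⬝ᵥ ((Mc blk B β) + (Mc blk B β)ᴴ) *ᵥ e).re := by
    rw [Matrix.add_mulVec, dotProduct_add, Complex.add_re]
    have h2 := star_dot_mulVec (Mc blk B β) e e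
    rw [← h2, Complex.star_def, Complex.conj_re]
    ring
  have E4mat : (Mc blk B β) + (Mc blk B β)ᴴ = (2:ℂ) • 1 + (β:ℂ) • (Bc - Dc blk B) := by
    have h1 : (Mc blk B β)ᴴ = 1 + (β:ℂ) • ((upperBlockPart blk B).map Complex.ofReal)ᴴ := by
      simp only [Mc, Matrix.conjTranspose_add, Matrix.conjTranspose_one,
        Matrix.conjTranspose_smul, Complex.star_def, conj_ofReal]
    rw [h1, ← upper_add_conj blk B hB]
    simp only [Mc, smul_add, two_smul]
    abel
  have E4 : (star e ⬝ᵥ ((Mc blk B β) + (Mc blk B β)ᴴ) *ᵥ e).re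
      = 2*(star e ⬝ᵥ e).re + β*(d e e).re - β*(star e ⬝ᵥ (Dc blk B) *ᵥ e).re := by
    rw [E4mat, Matrix.add_mulVec, Matrix.smul_mulVec, Matrix.smul_mulVec,
      Matrix.one_mulVec, Matrix.sub_mulVec, dotProduct_add, dotProduct_smul, dotProduct_smul,
      dotProduct_sub]
    simp only [smul_eq_mul, Complex.add_re, Complex.mul_re, Complex.sub_re, Complex.ofReal_re,
      Complex.ofReal_im, hd]
    norm_num
    ring
  have E5 := dD_le blk B hB e
  have Epos := re_star_dot_self_nonneg e
  have hb2 : β * ((star x ⬝ᵥ Bc *ᵥ x).re - (star Ax ⬝ᵥ Bc *ᵥ Ax).re)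
      = 2*(star e ⬝ᵥ e).re - β * (star e ⬝ᵥ (Dc blk B) *ᵥ e).re := by
    have h3 : (star x ⬝ᵥ Bc *ᵥ x).re - (star Ax ⬝ᵥ Bc *ᵥ Ax).re
        = 2*(d e x).re - (d e e).re := by
      rw [E1]
      simp only [Complex.add_re, Complex.sub_re]
      linarith [hconj x e]
    rw [h3]
    linarith [E2, E3, E4]
  rw [hb2]
  have key := mul_nonneg (sub_nonneg.mpr hρβ.le) Epos
  have E5b := mul_le_mul_of_nonneg_left E5 hβ0.le
  nlinarith [key, E5b]
end Energy
end BCGDAux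
namespace BCGDAux
open Complex Filter Topology

variable {ι : Type*} [Fintype ι] [DecidableEq ι]

/-- vectors whose `C`-power orbit tends to zero -/
def tendZero (C : Matrix ι ι ℂ) : Submodule ℂ (ι → ℂ) where
  carrier := {x | Tendsto (fun m => (C ^ m) *ᵥ x) atTop (𝓝 0)}
  add_mem' := by
    intro a b ha hb
    simpa [Matrix.mulVec_add] using ha.add hb
  zero_mem' := by
    simpa [Matrix.mulVec_zero] using (tendsto_const_nhds :
      Tendsto (fun _ : ℕ => (0 : ι → ℂ)) atTop (𝓝 0))
  smul_mem' := by
    intro c a ha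
    simpa [Matrix.mulVec_smul] using ha.const_smul c

lemma mem_tendZero_iff (C : Matrix ι ι ℂ) (x : ι → ℂ) :
    x ∈ tendZero C ↔ Tendsto (fun m => (C ^ m) *ᵥ x) atTop (𝓝 0) := Iff.rfl

lemma mem_tendZero_of_genEig (C : Matrix ι ι ℂ) (ν : ℂ) (hν : ‖ν‖ < 1) (k : ℕ)
    (u : ι → ℂ) (hu : ((C - ν • 1) ^ k) *ᵥ u = 0) : u ∈ tendZero C := by
  classical
  set S : Matrix ι ι ℂ := C - ν • 1 with hS
  have hC : C = S + ν • 1 := by rw [hS]; abel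
  have hsum : ∀ (f : ℕ → Matrix ι ι ℂ) (s : Finset ℕ), (∑ j ∈ s, f j) *ᵥ u = ∑ j ∈ s, f j *ᵥ u := by
    intro f s
    induction s using Finset.induction with
    | empty => simp
    | insert a s h ih => rw [Finset.sum_insert h, Finset.sum_insert h, Matrix.add_mulVec, ih]
  have hcomm : Commute S ((ν:ℂ) • (1 : Matrix ι ι ℂ)) := (Commute.one_right S).smul_right ν
  have hSvanish : ∀ j, k ≤ j → (S ^ j) *ᵥ u = 0 := by
    intro j hj
    have h1 : S ^ j = S ^ (j - k) * S ^ k := by rw [← pow_add, Nat.sub_add_cancel hj]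
    rw [h1, ← Matrix.mulVec_mulVec, hu, Matrix.mulVec_zero]
  have formula : ∀ m, k ≤ m → (C ^ m) *ᵥ u
      = ∑ j ∈ Finset.range k, ((m.choose j : ℂ) * ν ^ (m - j)) • ((S ^ j) *ᵥ u) := by
    intro m hm
    have hpow : C ^ m = ∑ j ∈ Finset.range (m + 1),
        ((m.choose j : ℂ) * ν ^ (m - j)) • S ^ j := by
      rw [hC, hcomm.add_pow]
      refine Finset.sum_congr rfl fun j hj => ?_
      rw [smul_pow, one_pow, Matrix.mul_smul, mul_one, Matrix.smul_mul,
        ← (Nat.cast_commute (m.choose j) (S ^ j)).eq,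
        ← nsmul_eq_mul, ← Nat.cast_smul_eq_nsmul ℂ (m.choose j) (S ^ j),
        smul_smul, mul_comm]
    rw [hpow, hsum]
    rw [← Finset.sum_subset (Finset.range_subset_range.mpr (by omega : k ≤ m + 1))]
    · exact Finset.sum_congr rfl fun j _ => by rw [Matrix.smul_mulVec]
    · intro j hj hnj
      rw [Matrix.smul_mulVec, hSvanish j (by simpa using hnj), smul_zero]
  have main : Tendsto (fun m => ∑ j ∈ Finset.range k,
      ((m.choose j : ℂ) * ν ^ (m - j)) • ((S ^ j) *ᵥ u)) atTop (𝓝 0) := by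
    have h0 : (0 : ι → ℂ) = ∑ _j ∈ Finset.range k, (0 : ι → ℂ) := by simp
    rw [h0]
    refine tendsto_finset_sum _ fun j _ => ?_
    have hsc : Tendsto (fun m : ℕ => (m.choose j : ℂ) * ν ^ (m - j)) atTop (𝓝 0) := by
      rcases eq_or_ne ν 0 with h0' | h0'
      · refine Tendsto.congr' ?_ (tendsto_const_nhds : Tendsto (fun _ : ℕ => (0:ℂ)) _ _)
        filter_upwards [eventually_ge_atTop (j + 1)] with m hm
        rw [h0', zero_pow (by omega : m - j ≠ 0), mul_zero]
      · set r := ‖ν‖ with hr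
        have hr0 : 0 < r := by simpa [hr] using norm_pos_iff.mpr h0'
        refine squeeze_zero_norm' (a := fun m : ℕ => (m : ℝ) ^ j * r ^ m * (r⁻¹) ^ j) ?_ ?_
        · filter_upwards [eventually_ge_atTop j] with m hm
          rw [norm_mul, norm_pow, Complex.norm_natCast, ← hr]
          rw [pow_sub₀ r (ne_of_gt hr0) hm, ← inv_pow]
          calc (m.choose j : ℝ) * (r ^ m * (r⁻¹) ^ j)
              ≤ (m : ℝ) ^ j * (r ^ m * (r⁻¹) ^ j) := by
                refine mul_le_mul_of_nonneg_right ?_ (by positivity)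
                exact_mod_cast Nat.choose_le_pow m j
            _ = (m : ℝ) ^ j * r ^ m * (r⁻¹) ^ j := by ring
        · have hlim := (tendsto_pow_const_mul_const_pow_of_abs_lt_one j
            (r := r) (by rwa [_root_.abs_of_nonneg hr0.le])).mul_const ((r⁻¹) ^ j)
          simpa using hlim
    simpa using hsc.smul_const ((S ^ j) *ᵥ u)
  refine Tendsto.congr' ?_ main
  filter_upwards [eventually_ge_atTop k] with m hm
  exact (formula m hm).symm

end BCGDAux
namespace BCGDAux
open Complex Filter Topology

/-- the quadratic form -/
def hq {ι : Type*} [Fintype ι] (B : Matrix ι ι ℝ) (x : ι → ℂ) : ℝ :=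
  (star x ⬝ᵥ (B.map Complex.ofReal) *ᵥ x).re

section EnergyCor
variable {n p : ℕ} (blk : Fin n → Fin p) (B : Matrix (Fin n) (Fin n) ℝ) (β : ℝ)

lemma hq_mono (hB : B.IsSymm) (hβ0 : 0 < β) (hρβ : β * specRad B < 1) (x : Fin n → ℂ) :
    hq B ((Amat blk B β).map Complex.ofReal *ᵥ x) ≤ hq B x := by
  have hE : (star (x - (Amat blk B β).map Complex.ofReal *ᵥ x)
        ⬝ᵥ (x - (Amat blk B β).map Complex.ofReal *ᵥ x)).re
      ≤ β * (hq B x - hq B ((Amat blk B β).map Complex.ofReal *ᵥ x)) :=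
    energy blk B β hB hβ0 hρβ x
  have hnn := re_star_dot_self_nonneg (x - (Amat blk B β).map Complex.ofReal *ᵥ x)
  have h2 : β * 0 ≤ β * (hq B x - hq B ((Amat blk B β).map Complex.ofReal *ᵥ x)) := by
    rw [mul_zero]
    exact le_trans hnn hE
  have h3 := le_of_mul_le_mul_left h2 hβ0
  linarith

lemma hq_fix (hB : B.IsSymm) (hβ0 : 0 < β) (hρβ : β * specRad B < 1) (x : Fin n → ℂ)
    (hx : hq B x ≤ hq B ((Amat blk B β).map Complex.ofReal *ᵥ x)) :
    (B.map Complex.ofReal) *ᵥ x = 0 ∧ (Amat blk B β).map Complex.ofReal *ᵥ x = x := by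
  have hE : (star (x - (Amat blk B β).map Complex.ofReal *ᵥ x)
        ⬝ᵥ (x - (Amat blk B β).map Complex.ofReal *ᵥ x)).re
      ≤ β * (hq B x - hq B ((Amat blk B β).map Complex.ofReal *ᵥ x)) :=
    energy blk B β hB hβ0 hρβ x
  have he0 : x - (Amat blk B β).map Complex.ofReal *ᵥ x = 0 := by
    apply eq_zero_of_re_star_dot_self
    nlinarith [mul_nonneg hβ0.le
      (by linarith : (0:ℝ) ≤ hq B ((Amat blk B β).map Complex.ofReal *ᵥ x) - hq B x)]
  constructor
  · have hMce := Mc_e blk B β x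
    rw [he0, Matrix.mulVec_zero] at hMce
    have hβne : (β:ℂ) ≠ 0 := by exact_mod_cast ne_of_gt hβ0
    exact ((smul_eq_zero.mp hMce.symm).resolve_left hβne)
  · exact (sub_eq_zero.mp he0).symm

lemma hq_fixpoint_kerB (hB : B.IsSymm) (hβ0 : 0 < β) (hρβ : β * specRad B < 1) (x : Fin n → ℂ)
    (hx : (Amat blk B β).map Complex.ofReal *ᵥ x = x) :
    (B.map Complex.ofReal) *ᵥ x = 0 :=
  (hq_fix blk B β hB hβ0 hρβ x (le_of_eq (by rw [hx]))).1

end EnergyCor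

lemma ker_pow_stab {ι : Type*} [Fintype ι] [DecidableEq ι] (N : Matrix ι ι ℂ)
    (hstab : ∀ x, N *ᵥ (N *ᵥ x) = 0 → N *ᵥ x = 0) :
    ∀ (k : ℕ) (x : ι → ℂ), (N ^ k) *ᵥ x = 0 → N *ᵥ x = 0 := by
  intro k
  induction k with
  | zero =>
    intro x hx
    rw [pow_zero, Matrix.one_mulVec] at hx
    rw [hx, Matrix.mulVec_zero]
  | succ k ih =>
    intro x hx
    refine hstab x (ih _ ?_)
    rw [Matrix.mulVec_mulVec, ← pow_succ]
    exact hx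

end BCGDAux
namespace BCGDAux
open Complex Filter Topology

lemma map_mulVec_ofReal {ι : Type*} [Fintype ι] (M : Matrix ι ι ℝ) (v : ι → ℝ) :
    (M.map Complex.ofReal) *ᵥ (fun i => (v i : ℂ)) = fun i => ((M *ᵥ v) i : ℂ) := by
  funext i
  simp [Matrix.mulVec, dotProduct, Matrix.map_apply]

lemma no_small_eigen_contradiction {n p : ℕ} (blk : Fin n → Fin p)
    (B : Matrix (Fin n) (Fin n) ℝ) (β : ℝ)
    (hB : B.IsSymm) (hβ0 : 0 < β) (hρβ : β * specRad B < 1)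
    (hinvA : IsUnit (Amat blk B β))
    (c : ℝ) (v : Fin n → ℝ) (hc : 0 < c) (hv : v ≠ 0) (hBv : B.mulVec v = c • v)
    (hall : ∀ (μ : ℂ) (w : Fin n → ℂ), w ≠ 0 →
      (Amat blk B β).map Complex.ofReal *ᵥ w = μ • w → 1 ≤ ‖μ‖) : False := by
  classical
  set Ac := (Amat blk B β).map Complex.ofReal with hAc
  set Bc := B.map Complex.ofReal with hBc
  set Cc := ((Amat blk B β)⁻¹).map Complex.ofReal with hCc
  have hdetA : IsUnit (Amat blk B β).det := (Matrix.isUnit_iff_isUnit_det _).mp hinvA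
  have hACc : Ac * Cc = 1 := by
    rw [hAc, hCc, show Complex.ofReal = ⇑Complex.ofRealHom from rfl, ← Matrix.map_mul,
      Matrix.mul_nonsing_inv _ hdetA]
    exact Matrix.map_one _ (map_zero _) (map_one _)
  have hCAc : Cc * Ac = 1 := by
    rw [hAc, hCc, show Complex.ofReal = ⇑Complex.ofRealHom from rfl, ← Matrix.map_mul,
      Matrix.nonsing_inv_mul _ hdetA]
    exact Matrix.map_one _ (map_zero _) (map_one _)
  have hBcH : Bcᴴ = Bc := hermitian_map B hB
  set T : Module.End ℂ (Fin n → ℂ) := Matrix.toLinAlgEquiv' Ac with hT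
  have hTapp : ∀ x, T x = Ac *ᵥ x := fun x => rfl
  have hTpow : ∀ (μ : ℂ) (k : ℕ) (x : Fin n → ℂ),
      ((T - μ • 1) ^ k) x = ((Ac - μ • 1) ^ k) *ᵥ x := by
    intro μ k x
    have h1 : (T - μ • 1) ^ k = Matrix.toLinAlgEquiv' ((Ac - μ • 1) ^ k) := by
      rw [map_pow, map_sub, _root_.map_smul, _root_.map_one]
    rw [h1, Matrix.toLinAlgEquiv'_apply]
  have hfix1 : ∀ w : Fin n → ℂ, Ac *ᵥ w = w → Bc *ᵥ w = 0 := fun w hw =>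
    hq_fixpoint_kerB blk B β hB hβ0 hρβ w hw
  have heig1 : ∀ (μ : ℂ) (w : Fin n → ℂ), w ≠ 0 → Ac *ᵥ w = μ • w →
      ‖μ‖ = 1 → Ac *ᵥ w = w ∧ μ = 1 := by
    intro μ w hw0 hμw habs
    have hsc : star (μ • w) ⬝ᵥ Bc *ᵥ (μ • w) = (star μ * μ) * (star w ⬝ᵥ Bc *ᵥ w) := by
      rw [star_smul, Matrix.mulVec_smul, smul_dotProduct, dotProduct_smul]
      simp only [smul_eq_mul]
      ring
    have hnormsq : star μ * μ = 1 := by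
      rw [Complex.star_def, mul_comm, Complex.mul_conj]
      rw [Complex.normSq_eq_norm_sq, habs]
      norm_num
    have hh : hq B (Ac *ᵥ w) = hq B w := by
      rw [hμw]
      show (star (μ • w) ⬝ᵥ B.map Complex.ofReal *ᵥ (μ • w)).re
        = (star w ⬝ᵥ B.map Complex.ofReal *ᵥ w).re
      rw [← hBc, hsc, hnormsq, one_mul]
    have hfx := hq_fix blk B β hB hβ0 hρβ w (le_of_eq hh.symm)
    have hAw : Ac *ᵥ w = w := hfx.2
    refine ⟨hAw, ?_⟩
    have h2 : μ • w = w := by rw [← hμw, hAw]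
    obtain ⟨i, hi⟩ := Function.ne_iff.mp hw0
    have h3 : μ * w i = w i := congrFun h2 i
    have hwi : w i ≠ 0 := by simpa using hi
    have h4 : (μ - 1) * w i = 0 := by linear_combination h3
    rcases mul_eq_zero.mp h4 with h5 | h5
    · exact sub_eq_zero.mp h5
    · exact absurd h5 hwi
  have hsuble : ∀ μ : ℂ,
      T.maxGenEigenspace μ ≤ LinearMap.ker (Matrix.mulVecLin Bc) ⊔ tendZero Cc := by
    intro μ
    rcases eq_or_ne (T.maxGenEigenspace μ) ⊥ with hbot | hne
    · rw [hbot]; exact bot_le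
    · obtain ⟨u0, hu0mem, hu0ne⟩ := Submodule.exists_mem_ne_zero_of_ne_bot hne
      obtain ⟨k0, hk0⟩ := (Module.End.mem_maxGenEigenspace T μ u0).mp hu0mem
      have hmem0 : u0 ∈ T.genEigenspace μ (k0 : ℕ∞) :=
        Module.End.mem_genEigenspace_nat.mpr (LinearMap.mem_ker.mpr hk0)
      have hgen : T.HasGenEigenvalue μ k0 := by
        intro hb
        rw [Submodule.eq_bot_iff] at hb
        exact hu0ne (hb u0 hmem0)
      have heigv : T.HasEigenvalue μ := Module.End.hasEigenvalue_of_hasGenEigenvalue hgen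
      obtain ⟨w, hwv⟩ := heigv.exists_hasEigenvector
      have hwe : Ac *ᵥ w = μ • w := by rw [← hTapp]; exact hwv.apply_eq_smul
      have h1le := hall μ w hwv.2 hwe
      rcases lt_or_eq_of_le h1le with hgt | heq1
      · intro u humem
        obtain ⟨k, hk⟩ := (Module.End.mem_maxGenEigenspace T μ u).mp humem
        rw [hTpow] at hk
        refine Submodule.mem_sup_right ?_
        have hμ0 : μ ≠ 0 := by
          intro h0
          rw [h0] at hgt
          simp only [norm_zero] at hgt
          norm_num at hgt
        have hAC_comm : Commute Ac Cc := by
          show Ac * Cc = Cc * Ac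
          rw [hACc, hCAc]
        have hS'comm : Commute Ac (Cc - μ⁻¹ • 1) :=
          hAC_comm.sub_right ((Commute.one_right Ac).smul_right μ⁻¹)
        have hkey : Ac - μ • 1 = (-μ) • (Ac * (Cc - μ⁻¹ • 1)) := by
          rw [Matrix.mul_sub, hACc, Matrix.mul_smul, mul_one, smul_sub, smul_smul,
            neg_mul, mul_inv_cancel₀ hμ0]
          simp only [neg_smul, one_smul, sub_neg_eq_add]
          abel
        have hk2 : ((Cc - μ⁻¹ • 1) ^ k) *ᵥ u = 0 := by
          rw [hkey, smul_pow, hS'comm.mul_pow, Matrix.smul_mulVec] at hk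
          have hscne : (-μ) ^ k ≠ 0 := pow_ne_zero _ (neg_ne_zero.mpr hμ0)
          have h6 : ((Ac ^ k) * ((Cc - μ⁻¹ • 1) ^ k)) *ᵥ u = 0 :=
            (smul_eq_zero.mp hk).resolve_left hscne
          have hCA_comm : Commute Cc Ac := hAC_comm.symm
          have h7 : Cc ^ k * Ac ^ k = 1 := by rw [← hCA_comm.mul_pow, hCAc, one_pow]
          calc ((Cc - μ⁻¹ • 1) ^ k) *ᵥ u
              = ((Cc ^ k * Ac ^ k) * ((Cc - μ⁻¹ • 1) ^ k)) *ᵥ u := by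
                rw [h7, Matrix.one_mul]
            _ = (Cc ^ k) *ᵥ (((Ac ^ k) * ((Cc - μ⁻¹ • 1) ^ k)) *ᵥ u) := by
                rw [Matrix.mulVec_mulVec, Matrix.mul_assoc]
            _ = 0 := by rw [h6, Matrix.mulVec_zero]
        exact mem_tendZero_of_genEig Cc μ⁻¹
          (by rw [norm_inv]; exact inv_lt_one_of_one_lt₀ hgt) k u hk2
      · obtain ⟨-, hμ1⟩ := heig1 μ w hwv.2 hwe heq1.symm
        subst hμ1
        intro u humem
        obtain ⟨k, hk⟩ := (Module.End.mem_maxGenEigenspace T 1 u).mp humem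
        rw [hTpow] at hk
        rw [one_smul] at hk
        have hstab : ∀ x : Fin n → ℂ, (Ac - 1) *ᵥ ((Ac - 1) *ᵥ x) = 0 →
            (Ac - 1) *ᵥ x = 0 := by
          intro x hx
          set wx := (Ac - 1) *ᵥ x with hwx
          have hwx' : wx = Ac *ᵥ x - x := by rw [hwx, Matrix.sub_mulVec, Matrix.one_mulVec]
          have hAwx : Ac *ᵥ wx = wx := by
            rw [Matrix.sub_mulVec, Matrix.one_mulVec, sub_eq_zero] at hx
            exact hx
          have hBwx : Bc *ᵥ wx = 0 := hfix1 wx hAwx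
          have hAx : Ac *ᵥ x = x + wx := by rw [hwx']; abel
          have hcross1 : star x ⬝ᵥ Bc *ᵥ wx = 0 := by rw [hBwx, dotProduct_zero]
          have hcross2 : star wx ⬝ᵥ Bc *ᵥ x = 0 := by
            have h8 := star_dot_mulVec Bc x wx
            rw [hBcH] at h8
            rw [← h8, hcross1, star_zero]
          have hh : hq B (Ac *ᵥ x) = hq B x := by
            show (star (Ac *ᵥ x) ⬝ᵥ B.map Complex.ofReal *ᵥ (Ac *ᵥ x)).re
              = (star x ⬝ᵥ B.map Complex.ofReal *ᵥ x).re
            rw [← hBc, hAx, star_add, add_dotProduct, Matrix.mulVec_add, dotProduct_add,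
              dotProduct_add, hcross1, hcross2]
            have h9 : star wx ⬝ᵥ Bc *ᵥ wx = 0 := by rw [hBwx, dotProduct_zero]
            rw [h9]
            simp
          have hfx := hq_fix blk B β hB hβ0 hρβ x (le_of_eq hh.symm)
          rw [hwx', hfx.2, sub_self]
        have hker := ker_pow_stab (Ac - 1) hstab k u hk
        rw [Matrix.sub_mulVec, Matrix.one_mulVec, sub_eq_zero] at hker
        refine Submodule.mem_sup_left ?_
        rw [LinearMap.mem_ker, Matrix.mulVecLin_apply]
        exact hfix1 u hker
  have htop := Module.End.iSup_maxGenEigenspace_eq_top T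
  set vc : Fin n → ℂ := fun i => (v i : ℂ) with hvcdef
  have hvmem : vc ∈ LinearMap.ker (Matrix.mulVecLin Bc) ⊔ tendZero Cc := by
    have h9 : vc ∈ (⊤ : Submodule ℂ (Fin n → ℂ)) := Submodule.mem_top
    rw [← htop] at h9
    exact (iSup_le hsuble) h9
  obtain ⟨y, hy, z, hz, hyz⟩ := Submodule.mem_sup.mp hvmem
  have hBy : Bc *ᵥ y = 0 := by
    rw [LinearMap.mem_ker, Matrix.mulVecLin_apply] at hy
    exact hy
  have hWT : hq B z ≤ 0 := by
    have hu : Tendsto (fun m => (Cc ^ m) *ᵥ z) atTop (𝓝 0) := hz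
    have hmono2 : ∀ m : ℕ, hq B z ≤ hq B ((Cc ^ m) *ᵥ z) := by
      intro m
      induction m with
      | zero => rw [pow_zero, Matrix.one_mulVec]
      | succ m ih =>
        have hstep : Ac *ᵥ ((Cc ^ (m + 1)) *ᵥ z) = (Cc ^ m) *ᵥ z := by
          rw [Matrix.mulVec_mulVec, pow_succ', ← Matrix.mul_assoc, hACc, Matrix.one_mul]
        calc hq B z ≤ hq B ((Cc ^ m) *ᵥ z) := ih
          _ = hq B (Ac *ᵥ ((Cc ^ (m + 1)) *ᵥ z)) := by rw [hstep]
          _ ≤ hq B ((Cc ^ (m + 1)) *ᵥ z) := hq_mono blk B β hB hβ0 hρβ _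
    have hcont : Continuous (hq B) := by
      apply Complex.continuous_re.comp
      exact Continuous.dotProduct (continuous_star.comp continuous_id)
        (Continuous.matrix_mulVec continuous_const continuous_id)
    have htend2 : Tendsto (fun m => hq B ((Cc ^ m) *ᵥ z)) atTop (𝓝 (hq B 0)) :=
      (hcont.tendsto 0).comp hu
    have hq0 : hq B (0 : Fin n → ℂ) = 0 := by simp [hq]
    have h14 := ge_of_tendsto htend2 (Filter.Eventually.of_forall hmono2)
    rw [hq0] at h14
    exact h14
  have hcross : star y ⬝ᵥ Bc *ᵥ z = 0 := by
    have h10 := star_dot_mulVec Bc z y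
    rw [hBcH] at h10
    rw [← h10, hBy, dotProduct_zero, star_zero]
  have hsplit : hq B vc = hq B z := by
    show (star vc ⬝ᵥ B.map Complex.ofReal *ᵥ vc).re
      = (star z ⬝ᵥ B.map Complex.ofReal *ᵥ z).re
    rw [← hBc, ← hyz, star_add, add_dotProduct, Matrix.mulVec_add, dotProduct_add,
      dotProduct_add, hcross]
    have h11 : star y ⬝ᵥ Bc *ᵥ y = 0 := by rw [hBy, dotProduct_zero]
    have h12 : star z ⬝ᵥ Bc *ᵥ y = 0 := by rw [hBy, dotProduct_zero]
    rw [h11, h12]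
    simp
  have hvc_eig : Bc *ᵥ vc = ((c : ℝ) : ℂ) • vc := by
    rw [hBc, hvcdef, map_mulVec_ofReal, hBv]
    funext i
    simp [Complex.real_smul]
  have hqvc : hq B vc = c * (star vc ⬝ᵥ vc).re := by
    show (star vc ⬝ᵥ B.map Complex.ofReal *ᵥ vc).re = _
    rw [← hBc, hvc_eig, dotProduct_smul]
    simp [Complex.re_ofReal_mul]
  have hpos3 : 0 < (star vc ⬝ᵥ vc).re := by
    rw [re_star_dot_self]
    obtain ⟨i, hi⟩ := Function.ne_iff.mp hv
    have hvi : v i ≠ 0 := by simpa using hi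
    have h13 : 0 < Complex.normSq (vc i) := by
      have hrfl : vc i = ((v i : ℝ) : ℂ) := rfl
      rw [hrfl]
      exact Complex.normSq_pos.mpr (by exact_mod_cast hvi)
    exact lt_of_lt_of_le h13
      (Finset.single_le_sum (fun j _ => Complex.normSq_nonneg _) (Finset.mem_univ i))
  nlinarith [hWT, hsplit, hqvc, mul_pos hc hpos3]

end BCGDAux
/-- if the symmetric matrix `B` has a positive eigenvalue, `β ∈ (0, 1/ρ(B))`
and `I − β(I + β B̂)⁻¹B` is invertible, then `(I − β(I + β B̂)⁻¹B)⁻¹` has an eigenvalue of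
magnitude strictly greater than one. -/
theorem inv_one_sub_beta_inv_upper_mul_has_expanding_eigenvalue
    {n p : ℕ} (hp : 0 < p) (blk : Fin n → Fin p)
    (hmono : Monotone blk) (hsurj : Function.Surjective blk)
    (B : Matrix (Fin n) (Fin n) ℝ) (hB : B.IsSymm)
    (hpos : HasPosEigenvalue B)
    (β : ℝ) (hβ0 : 0 < β) (hβ1 : β < 1 / specRad B)
    (hinv : IsUnit ((1 : Matrix (Fin n) (Fin n) ℝ) -
      β • (((1 : Matrix (Fin n) (Fin n) ℝ) + β • upperBlockPart blk B)⁻¹ * B))) :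
    ∃ z : ℂ, IsEigenvalue (((1 : Matrix (Fin n) (Fin n) ℝ) -
      β • (((1 : Matrix (Fin n) (Fin n) ℝ) + β • upperBlockPart blk B)⁻¹ * B))⁻¹) z ∧
      1 < ‖z‖ := by
  classical
  obtain ⟨c, v, hc, hv, hBv⟩ := hpos
  have hvc : IsEigenvalue B ((c : ℝ) : ℂ) := by
    refine ⟨fun i => (v i : ℂ), ?_, ?_⟩
    · intro hz
      apply hv
      funext i
      have h1 := congrFun hz i
      simpa using h1
    · rw [BCGDAux.map_mulVec_ofReal, hBv]
      funext i
      simp [Complex.real_smul]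
  have hρpos : 0 < specRad B := by
    refine lt_of_lt_of_le hc ?_
    have h2 := BCGDAux.abs_le_specRad B hvc
    rwa [Complex.norm_real, Real.norm_eq_abs, abs_of_pos hc] at h2
  have hρβ : β * specRad B < 1 := (lt_div_iff₀ hρpos).mp hβ1
  have hinvA : IsUnit (BCGDAux.Amat blk B β) := hinv
  show ∃ z : ℂ, IsEigenvalue ((BCGDAux.Amat blk B β)⁻¹) z ∧ 1 < ‖z‖
  by_cases hP : ∃ (μ : ℂ) (w : Fin n → ℂ), w ≠ 0 ∧
      (BCGDAux.Amat blk B β).map Complex.ofReal *ᵥ w = μ • w ∧ ‖μ‖ < 1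
  · obtain ⟨μ, w, hw0, hμw, hμ1⟩ := hP
    have hdetA : IsUnit (BCGDAux.Amat blk B β).det :=
      (Matrix.isUnit_iff_isUnit_det _).mp hinvA
    have hCAc : ((BCGDAux.Amat blk B β)⁻¹).map Complex.ofReal
        * (BCGDAux.Amat blk B β).map Complex.ofReal = 1 := by
      rw [show Complex.ofReal = ⇑Complex.ofRealHom from rfl, ← Matrix.map_mul,
        Matrix.nonsing_inv_mul _ hdetA]
      exact Matrix.map_one _ (map_zero _) (map_one _)
    have hμ0 : μ ≠ 0 := by
      rintro rfl
      apply hw0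
      have h1 : w = (((BCGDAux.Amat blk B β)⁻¹).map Complex.ofReal
          * (BCGDAux.Amat blk B β).map Complex.ofReal) *ᵥ w := by
        rw [hCAc, Matrix.one_mulVec]
      rw [h1, ← Matrix.mulVec_mulVec, hμw, zero_smul, Matrix.mulVec_zero]
    have hCw : ((BCGDAux.Amat blk B β)⁻¹).map Complex.ofReal *ᵥ w = μ⁻¹ • w := by
      have h1 : w = ((BCGDAux.Amat blk B β)⁻¹).map Complex.ofReal *ᵥ
          ((BCGDAux.Amat blk B β).map Complex.ofReal *ᵥ w) := by
        rw [Matrix.mulVec_mulVec, hCAc, Matrix.one_mulVec]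
      rw [hμw, Matrix.mulVec_smul] at h1
      have h3 := congrArg (fun t => μ⁻¹ • t) h1
      simp only [smul_smul, inv_mul_cancel₀ hμ0, one_smul] at h3
      exact h3.symm
    refine ⟨μ⁻¹, ⟨w, hw0, hCw⟩, ?_⟩
    rw [norm_inv]
    exact (one_lt_inv₀ (norm_pos_iff.mpr hμ0)).mpr hμ1
  · push_neg at hP
    exfalso
    exact BCGDAux.no_small_eigen_contradiction blk B β hB hβ0 hρβ hinvA c v hc hv hBv
      (fun μ w hw0 hwe => hP μ w hw0 hwe)

end
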